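/- arXiv:1901.06442 — 2 statements merged into one kernel-verified Lean document; each statement's English description precedes it below -/
import Mathlib

section
/- Consider a wiretap channel with noiseless main channel where Alice encodes a uniformly distributed secret S^m ∈ F_2^m by coset coding with parity check matrix A = [I_m | A_2] ∈ F_2^{m×n}, and Eve observes Z^n = X^n ⊕ V^n where V^n is an i.i.d. Bernoulli(δ) noise vector independent of the encoding. Then the mutual information satisfies I(S^m; Z^n) = m - H(A·V^n), where H denotes Shannon entropy in bits. -/
open Finset

/-- Shannon entropy in bits of a pmf on a finite type. -/
noncomputable def ent {α : Type*} [Fintype α] (p : α → ℝ) : ℝ :=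
  -∑ a, p a * Real.logb 2 (p a)

/-- pmf of an i.i.d. Bernoulli(δ) noise vector over `F_2`. -/
def noisePMF (δ : ℝ) {ι : Type*} [Fintype ι] (v : ι → ZMod 2) : ℝ :=
  ∏ i, if v i = 1 then δ else 1 - δ

/-- Coset-coding codeword `X^n = (S^m ⊕ A_2·U^{n-m}, U^{n-m})`, with the `n = m + k`
coordinates indexed by `Fin m ⊕ Fin k`. -/
def codeword {m k : ℕ} (A2 : Matrix (Fin m) (Fin k) (ZMod 2))
    (s : Fin m → ZMod 2) (u : Fin k → ZMod 2) : (Fin m ⊕ Fin k) → ZMod 2 :=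
  Sum.elim (fun j => s j + A2.mulVec u j) u

/-- The parity check matrix `A = [I_m | A_2]`. -/
def pcheck {m k : ℕ} (A2 : Matrix (Fin m) (Fin k) (ZMod 2)) :
    Matrix (Fin m) (Fin m ⊕ Fin k) (ZMod 2) :=
  Matrix.of fun j => Sum.elim (fun j' => if j = j' then 1 else 0) (fun i => A2 j i)

/-- Joint pmf of the uniform secret `S^m` and Eve's observation `Z^n = X^n ⊕ V^n`,
where `X^n` is the coset-coding codeword with independent uniform randomness `U` and
`V^n` is i.i.d. Bernoulli(δ) noise independent of everything else. -/
noncomputable def pSZ {m k : ℕ} (δ : ℝ) (A2 : Matrix (Fin m) (Fin k) (ZMod 2))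
    (s : Fin m → ZMod 2) (z : (Fin m ⊕ Fin k) → ZMod 2) : ℝ :=
  ∑ u : Fin k → ZMod 2, ∑ v : (Fin m ⊕ Fin k) → ZMod 2,
    (1 / 2 ^ m) * (1 / 2 ^ k) * noisePMF δ v *
      (if z = codeword A2 s u + v then 1 else 0)

/-- pmf of `A·V^n`. -/
noncomputable def pAV {m k : ℕ} (δ : ℝ) (A2 : Matrix (Fin m) (Fin k) (ZMod 2))
    (x : Fin m → ZMod 2) : ℝ :=
  ∑ v : (Fin m ⊕ Fin k) → ZMod 2,
    noisePMF δ v * (if (pcheck A2).mulVec v = x then 1 else 0)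

lemma pcheck_codeword {m k : ℕ} (A2 : Matrix (Fin m) (Fin k) (ZMod 2))
    (s : Fin m → ZMod 2) (u : Fin k → ZMod 2) :
    (pcheck A2).mulVec (codeword A2 s u) = s := by
  funext j
  simp only [pcheck, codeword, Matrix.mulVec, dotProduct, Matrix.of_apply,
    Fintype.sum_sum_type, Sum.elim_inl, Sum.elim_inr, ite_mul, one_mul, zero_mul,
    Finset.sum_ite_eq, Finset.mem_univ, if_true]
  rw [add_assoc]
  simp [CharTwo.add_self_eq_zero]

lemma codeword_eq {m k : ℕ} (A2 : Matrix (Fin m) (Fin k) (ZMod 2))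
    (s : Fin m → ZMod 2) (w : (Fin m ⊕ Fin k) → ZMod 2)
    (h : (pcheck A2).mulVec w = s) : codeword A2 s (fun i => w (Sum.inr i)) = w := by
  funext j
  cases j with
  | inr i => rfl
  | inl j =>
    have hj := congrFun h j
    simp only [pcheck, Matrix.mulVec, dotProduct, Matrix.of_apply,
      Fintype.sum_sum_type, Sum.elim_inl, Sum.elim_inr, ite_mul, one_mul, zero_mul,
      Finset.sum_ite_eq, Finset.mem_univ, if_true] at hj
    simp only [codeword, Sum.elim_inl, Matrix.mulVec, dotProduct]
    rw [← hj]
    rw [add_assoc]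
    simp [CharTwo.add_self_eq_zero]

lemma pSZ_eq {m k : ℕ} (δ : ℝ) (A2 : Matrix (Fin m) (Fin k) (ZMod 2))
    (s : Fin m → ZMod 2) (z : (Fin m ⊕ Fin k) → ZMod 2) :
    pSZ δ A2 s z = (1 / 2 ^ (m + k)) * pAV δ A2 (s + (pcheck A2).mulVec z) := by
  classical
  have hcollapse : ∀ u : Fin k → ZMod 2,
      (∑ v : (Fin m ⊕ Fin k) → ZMod 2,
        (1 / 2 ^ m : ℝ) * (1 / 2 ^ k) * noisePMF δ v *
          (if z = codeword A2 s u + v then 1 else 0))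
      = (1 / 2 ^ m) * (1 / 2 ^ k) * noisePMF δ (codeword A2 s u + z) := by
    intro u
    rw [Finset.sum_eq_single (codeword A2 s u + z)]
    · rw [if_pos, mul_one]
      funext j
      simp only [Pi.add_apply]
      rw [← add_assoc]
      simp [CharTwo.add_self_eq_zero]
    · intro v _ hv
      rw [if_neg, mul_zero]
      intro hz
      apply hv
      funext j
      have h1 := congrFun hz j
      simp only [Pi.add_apply] at h1 ⊢
      rw [h1, ← add_assoc]
      simp [CharTwo.add_self_eq_zero]
    · simp
  unfold pSZ
  simp_rw [hcollapse, ← Finset.mul_sum]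
  have key : ∑ u : Fin k → ZMod 2, noisePMF δ (codeword A2 s u + z)
      = pAV δ A2 (s + (pcheck A2).mulVec z) := by
    unfold pAV
    simp_rw [mul_ite, mul_one, mul_zero, ← Finset.sum_filter]
    refine Finset.sum_nbij' (i := fun u => codeword A2 s u + z)
      (j := fun v => fun i => (v + z) (Sum.inr i)) ?_ ?_ ?_ ?_ ?_
    · intro u _
      simp only [Finset.mem_filter, Finset.mem_univ, true_and]
      rw [Matrix.mulVec_add, pcheck_codeword]
    · intro v _; exact Finset.mem_univ _
    · intro u _
      funext i
      simp only [Pi.add_apply, codeword, Sum.elim_inr]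
      rw [add_assoc]
      simp [CharTwo.add_self_eq_zero]
    · intro v hv
      simp only [Finset.mem_filter, Finset.mem_univ, true_and] at hv
      have hA : (pcheck A2).mulVec (v + z) = s := by
        rw [Matrix.mulVec_add, hv]
        funext j
        simp only [Pi.add_apply]
        rw [add_assoc]
        simp [CharTwo.add_self_eq_zero]
      have := codeword_eq A2 s (v + z) hA
      funext j
      have h2 := congrFun this j
      simp only [Pi.add_apply] at h2 ⊢
      rw [h2]
      rw [add_assoc]
      simp [CharTwo.add_self_eq_zero]
    · intro u _; rfl
  rw [key]
  rw [pow_add]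
  ring

lemma sum_noise (δ : ℝ) {ι : Type*} [Fintype ι] [DecidableEq ι] :
    ∑ v : ι → ZMod 2, noisePMF δ v = 1 := by
  unfold noisePMF
  rw [← Fintype.piFinset_univ,
    ← Finset.prod_univ_sum (f := fun (_ : ι) (a : ZMod 2) => if a = 1 then δ else 1 - δ)]
  have h : ∑ a : ZMod 2, (if a = 1 then δ else 1 - δ) = 1 := by
    show ∑ a : Fin 2, (if a = 1 then δ else 1 - δ) = 1
    rw [Fin.sum_univ_two]
    norm_num
  simp [h]

lemma card_fun_zmod {ι : Type*} [Fintype ι] [DecidableEq ι] :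
    Fintype.card (ι → ZMod 2) = 2 ^ Fintype.card ι := by
  rw [Fintype.card_fun]; rfl

lemma sum_pAV {m k : ℕ} (δ : ℝ) (A2 : Matrix (Fin m) (Fin k) (ZMod 2)) :
    ∑ x : Fin m → ZMod 2, pAV δ A2 x = 1 := by
  classical
  unfold pAV
  rw [Finset.sum_comm]
  have : ∀ v : (Fin m ⊕ Fin k) → ZMod 2,
      (∑ x : Fin m → ZMod 2, noisePMF δ v * (if (pcheck A2).mulVec v = x then 1 else 0))
        = noisePMF δ v := by
    intro v
    simp [Finset.sum_ite_eq, mul_ite]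
  simp_rw [this]
  exact sum_noise δ

lemma marg_s {m k : ℕ} (δ : ℝ) (A2 : Matrix (Fin m) (Fin k) (ZMod 2))
    (s : Fin m → ZMod 2) :
    ∑ z : (Fin m ⊕ Fin k) → ZMod 2, pSZ δ A2 s z = 1 / 2 ^ m := by
  classical
  unfold pSZ
  rw [Finset.sum_comm]
  have h1 : ∀ u : Fin k → ZMod 2,
      (∑ z : (Fin m ⊕ Fin k) → ZMod 2, ∑ v : (Fin m ⊕ Fin k) → ZMod 2,
        (1 / 2 ^ m : ℝ) * (1 / 2 ^ k) * noisePMF δ v *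
          (if z = codeword A2 s u + v then 1 else 0))
      = (1 / 2 ^ m) * (1 / 2 ^ k) := by
    intro u
    rw [Finset.sum_comm]
    have h2 : ∀ v : (Fin m ⊕ Fin k) → ZMod 2,
        (∑ z : (Fin m ⊕ Fin k) → ZMod 2,
          (1 / 2 ^ m : ℝ) * (1 / 2 ^ k) * noisePMF δ v *
            (if z = codeword A2 s u + v then 1 else 0))
        = (1 / 2 ^ m) * (1 / 2 ^ k) * noisePMF δ v := by
      intro v
      simp [mul_ite, Finset.sum_ite_eq']
    simp_rw [h2]
    rw [← Finset.mul_sum, sum_noise δ, mul_one]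
  simp_rw [h1]
  rw [Finset.sum_const, Finset.card_univ, card_fun_zmod]
  simp only [Fintype.card_fin, nsmul_eq_mul, Nat.cast_pow, Nat.cast_ofNat]
  field_simp

lemma marg_z {m k : ℕ} (δ : ℝ) (A2 : Matrix (Fin m) (Fin k) (ZMod 2))
    (z : (Fin m ⊕ Fin k) → ZMod 2) :
    ∑ s : Fin m → ZMod 2, pSZ δ A2 s z = 1 / 2 ^ (m + k) := by
  classical
  simp_rw [pSZ_eq, ← Finset.mul_sum]
  have : ∑ s : Fin m → ZMod 2, pAV δ A2 (s + (pcheck A2).mulVec z)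
      = ∑ x : Fin m → ZMod 2, pAV δ A2 x := by
    exact Fintype.sum_equiv (Equiv.addRight ((pcheck A2).mulVec z)) _ _ (fun s => rfl)
  rw [this, sum_pAV, mul_one]

lemma logb_two_pow (n : ℕ) : Real.logb 2 ((2:ℝ) ^ n) = n := by
  simp [Real.logb, Real.log_pow]
  rw [mul_div_assoc, div_self (ne_of_gt (Real.log_pos (by norm_num))), mul_one]

lemma ent_uniform {α : Type*} [Fintype α] (n : ℕ) (h : Fintype.card α = 2 ^ n) :
    ent (fun _ : α => (1 / 2 ^ n : ℝ)) = n := by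
  unfold ent
  rw [Finset.sum_const, Finset.card_univ, h]
  have h2 : Real.logb 2 ((1:ℝ) / 2 ^ n) = -n := by
    rw [one_div, Real.logb_inv, logb_two_pow]
  rw [h2]
  field_simp
  rw [nsmul_eq_mul]; push_cast; field_simp

lemma logb_inv_two_pow (n : ℕ) : Real.logb 2 ((1:ℝ) / 2 ^ n) = -n := by
  rw [one_div, Real.logb_inv, logb_two_pow]

lemma ent_joint {m k : ℕ} (δ : ℝ) (A2 : Matrix (Fin m) (Fin k) (ZMod 2)) :
    ent (fun p : (Fin m → ZMod 2) × ((Fin m ⊕ Fin k) → ZMod 2) => pSZ δ A2 p.1 p.2)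
      = ((m : ℝ) + k) + ent (pAV δ A2) := by
  classical
  unfold ent
  simp_rw [pSZ_eq]
  rw [Fintype.sum_prod_type, Finset.sum_comm]
  have hre : ∀ z : (Fin m ⊕ Fin k) → ZMod 2,
      (∑ s : Fin m → ZMod 2,
        (1 / 2 ^ (m + k) : ℝ) * pAV δ A2 (s + (pcheck A2).mulVec z) *
          Real.logb 2 ((1 / 2 ^ (m + k)) * pAV δ A2 (s + (pcheck A2).mulVec z)))
      = ∑ s : Fin m → ZMod 2,
        (1 / 2 ^ (m + k) : ℝ) * pAV δ A2 s *
          Real.logb 2 ((1 / 2 ^ (m + k)) * pAV δ A2 s) := fun z =>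
    Fintype.sum_equiv (Equiv.addRight ((pcheck A2).mulVec z)) _ _ (fun s => rfl)
  simp_rw [hre]
  rw [Finset.sum_const, Finset.card_univ, card_fun_zmod]
  have hc : ((1:ℝ) / 2 ^ (m + k)) ≠ 0 := by positivity
  have hsplit : (∑ s : Fin m → ZMod 2,
      (1 / 2 ^ (m + k) : ℝ) * pAV δ A2 s *
        Real.logb 2 ((1 / 2 ^ (m + k)) * pAV δ A2 s))
      = (1 / 2 ^ (m + k) : ℝ) * (-((m : ℝ) + k)) * (∑ s, pAV δ A2 s)
        + (1 / 2 ^ (m + k)) * ∑ s, pAV δ A2 s * Real.logb 2 (pAV δ A2 s) := by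
    rw [Finset.mul_sum, Finset.mul_sum, ← Finset.sum_add_distrib]
    refine Finset.sum_congr rfl fun s _ => ?_
    rcases eq_or_ne (pAV δ A2 s) 0 with h | h
    · simp [h]
    · rw [Real.logb_mul hc h, logb_inv_two_pow]
      push_cast
      ring
  rw [hsplit, sum_pAV]
  simp only [nsmul_eq_mul, Nat.cast_pow, Nat.cast_ofNat, Fintype.card_sum, Fintype.card_fin]
  have h2 : ((2:ℝ) ^ (m + k)) * (1 / 2 ^ (m + k)) = 1 := by field_simp
  field_simp
  ring

/-- Theorem 1: for the noiseless-main-channel wiretap channel with coset coding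
`A = [I_m | A_2]` and BSC(δ) eavesdropper channel,
`I(S^m; Z^n) = m - H(A·V^n)` (entropies in bits). -/
theorem stmt3 {m k : ℕ} (δ : ℝ) (hδ0 : 0 ≤ δ) (hδ1 : δ ≤ 1)
    (A2 : Matrix (Fin m) (Fin k) (ZMod 2)) :
    (ent (fun s => ∑ z, pSZ δ A2 s z) + ent (fun z => ∑ s, pSZ δ A2 s z)
        - ent (fun p : (Fin m → ZMod 2) × ((Fin m ⊕ Fin k) → ZMod 2) => pSZ δ A2 p.1 p.2))
      = (m : ℝ) - ent (pAV δ A2) := by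
  classical
  have hm : Fintype.card (Fin m → ZMod 2) = 2 ^ m := by
    rw [card_fun_zmod, Fintype.card_fin]
  have hn : Fintype.card ((Fin m ⊕ Fin k) → ZMod 2) = 2 ^ (m + k) := by
    rw [card_fun_zmod]; simp
  have e1 : ent (fun s => ∑ z, pSZ δ A2 s z) = (m : ℝ) := by
    have h : (fun s : Fin m → ZMod 2 => ∑ z, pSZ δ A2 s z)
        = fun _ => (1 / 2 ^ m : ℝ) := funext (marg_s δ A2)
    rw [h, ent_uniform m hm]
  have e2 : ent (fun z => ∑ s, pSZ δ A2 s z) = ((m + k : ℕ) : ℝ) := by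
    have h : (fun z : (Fin m ⊕ Fin k) → ZMod 2 => ∑ s, pSZ δ A2 s z)
        = fun _ => (1 / 2 ^ (m + k) : ℝ) := funext (marg_z δ A2)
    rw [h, ent_uniform (m + k) hn]
  rw [e1, e2, ent_joint δ A2]
  push_cast
  ring
end

section
/- Let a_1, ..., a_k ∈ F_2^m with the first w of them linearly independent and a_j in the span of {a_1,...,a_w} for j > w. Then in the group algebra R[F_2^m], the product Π_{j=1}^k (1/2 + (1/2)t^{a_j}) equals 2^{-w} Π_{i=1}^w (1 + t^{a_i}), i.e., it equals the uniform distribution on the span of {a_1,...,a_k}. -/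
open Finset

open scoped Classical in
/-- Uniform (unnormalized) indicator element of a submodule in the group algebra. -/
noncomputable def unifSp {m : ℕ} (W : Submodule (ZMod 2) (Fin m → ZMod 2)) :
    AddMonoidAlgebra ℝ (Fin m → ZMod 2) :=
  ∑ v ∈ Finset.univ.filter (· ∈ W), AddMonoidAlgebra.single v 1

open scoped Classical in
lemma unifSp_apply {m : ℕ} (W : Submodule (ZMod 2) (Fin m → ZMod 2))
    (v : Fin m → ZMod 2) : (unifSp W).coeff v = if v ∈ W then 1 else 0 := by
  rw [unifSp, AddMonoidAlgebra.coeff_sum, Finsupp.finset_sum_apply]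
  rw [Finset.sum_congr rfl (fun x _ => AddMonoidAlgebra.coeff_single_apply)]
  rw [Finset.sum_ite_eq' _ v (fun _ => (1:ℝ))]
  simp

lemma add_self_zero {m : ℕ} (x : Fin m → ZMod 2) : x + x = 0 := by
  funext i
  exact CharTwo.add_self_eq_zero _

open scoped Classical in
lemma single_mul_unifSp {m : ℕ} {W : Submodule (ZMod 2) (Fin m → ZMod 2)}
    {x : Fin m → ZMod 2} (hx : x ∈ W) :
    AddMonoidAlgebra.single x (1:ℝ) * unifSp W = unifSp W := by
  rw [unifSp, Finset.mul_sum]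
  simp only [AddMonoidAlgebra.single_mul_single, one_mul]
  refine Finset.sum_nbij' (fun v => x + v) (fun v => x + v) ?_ ?_ ?_ ?_ ?_
  · intro v hv
    simp only [Finset.mem_filter, Finset.mem_univ, true_and] at hv ⊢
    exact W.add_mem hx hv
  · intro v hv
    simp only [Finset.mem_filter, Finset.mem_univ, true_and] at hv ⊢
    exact W.add_mem hx hv
  · intro v _; show x + (x + v) = v; rw [← add_assoc, add_self_zero, zero_add]
  · intro v _; show x + (x + v) = v; rw [← add_assoc, add_self_zero, zero_add]
  · intro v _; rfl

open scoped Classical in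
lemma prod_one_add_single {m w : ℕ} (b : Fin w → (Fin m → ZMod 2))
    (hind : LinearIndependent (ZMod 2) b) :
    ∏ i : Fin w, (AddMonoidAlgebra.single (0 : Fin m → ZMod 2) (1:ℝ) +
        AddMonoidAlgebra.single (b i) 1) =
      unifSp (Submodule.span (ZMod 2) (Set.range b)) := by
  have h01 : ∀ x : ZMod 2, x = 0 ∨ x = 1 := by decide
  rw [Finset.prod_add]
  have hstep : ∀ t ∈ (Finset.univ : Finset (Fin w)).powerset,
      (∏ i ∈ t, AddMonoidAlgebra.single (0 : Fin m → ZMod 2) (1:ℝ)) *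
        ∏ i ∈ Finset.univ \ t, AddMonoidAlgebra.single (b i) (1:ℝ) =
      AddMonoidAlgebra.single (∑ i ∈ Finset.univ \ t, b i) (1:ℝ) := by
    intro t _
    rw [AddMonoidAlgebra.prod_single, AddMonoidAlgebra.prod_single]
    rw [AddMonoidAlgebra.single_mul_single]
    simp
  rw [Finset.sum_congr rfl hstep, unifSp]
  -- key indicator identity
  have hsum : ∀ t : Finset (Fin w),
      ∑ i : Fin w, (if i ∈ t then (1 : ZMod 2) else 0) • b i = ∑ i ∈ t, b i := by
    intro t
    have hterm : ∀ i : Fin w, (if i ∈ t then (1 : ZMod 2) else 0) • b i =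
        if i ∈ t then b i else 0 := by
      intro i; by_cases h : i ∈ t <;> simp [h]
    rw [Finset.sum_congr rfl fun i _ => hterm i, Finset.sum_ite_mem, Finset.univ_inter]
  refine Finset.sum_bij (fun t _ => ∑ i ∈ Finset.univ \ t, b i) ?_ ?_ ?_ ?_
  · intro t _
    simp only [Finset.mem_filter, Finset.mem_univ, true_and]
    exact Submodule.sum_mem _ (fun i _ => Submodule.subset_span (Set.mem_range_self i))
  · intro t₁ h₁ t₂ h₂ heq
    have hli := Fintype.linearIndependent_iff.mp hind
    have key : ∀ i, ((if i ∈ Finset.univ \ t₁ then (1:ZMod 2) else 0) -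
        (if i ∈ Finset.univ \ t₂ then (1:ZMod 2) else 0)) = 0 := by
      apply hli
      simp only [sub_smul]
      rw [Finset.sum_sub_distrib, hsum, hsum, heq, sub_self]
    have : Finset.univ \ t₁ = Finset.univ \ t₂ := by
      ext i
      have := key i
      by_cases h1 : i ∈ Finset.univ \ t₁ <;> by_cases h2 : i ∈ Finset.univ \ t₂ <;>
        simp [h1, h2] at this ⊢
    have ht : t₁ = t₂ := by
      ext i
      have h1 := Finset.ext_iff.mp this i
      simp only [Finset.mem_sdiff, Finset.mem_univ, true_and] at h1
      tauto
    exact ht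
  · intro v hv
    simp only [Finset.mem_filter, Finset.mem_univ, true_and] at hv
    obtain ⟨c, hc⟩ := (Submodule.mem_span_range_iff_exists_fun (ZMod 2)).mp hv
    refine ⟨Finset.univ \ Finset.univ.filter (fun i => c i = 1),
      Finset.mem_powerset.mpr (Finset.sdiff_subset.trans (le_refl _)), ?_⟩
    show ∑ i ∈ Finset.univ \ (Finset.univ \ Finset.univ.filter (fun i => c i = 1)), b i = v
    rw [Finset.sdiff_sdiff_self_left, Finset.univ_inter, ← hc, Finset.sum_filter]
    apply Finset.sum_congr rfl
    intro i _
    rcases h01 (c i) with h | h <;> simp [h]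
  · intro t _; rfl

lemma prod_smul_const {ι : Type*} {A : Type*} [CommMonoid A]
    [MulAction ℝ A] [IsScalarTower ℝ A A] [SMulCommClass ℝ A A]
    (s : Finset ι) (c : ℝ) (f : ι → A) :
    ∏ i ∈ s, c • f i = c ^ s.card • ∏ i ∈ s, f i := by
  classical
  induction s using Finset.induction_on with
  | empty => simp
  | insert j s hnot ih =>
    rw [Finset.prod_insert hnot, Finset.prod_insert hnot, ih,
      smul_mul_smul_comm, Finset.card_insert_of_notMem hnot, pow_succ']

/-- Let `a_1, …, a_K ∈ F_2^m` with the first `w` linearly independent and every `a_j`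
in the span of the first `w`.  Then in the group algebra `R[F_2^m]`,
`∏_{j=1}^K (1/2 + (1/2) t^{a_j}) = 2^{-w} ∏_{i=1}^w (1 + t^{a_i})`, i.e. the product
is the uniform distribution on the span of `{a_1, …, a_K}` (coefficient `2^{-w}` on
the span and `0` elsewhere). -/
theorem stmt19 {m K w : ℕ} (hw : w ≤ K) (a : Fin K → (Fin m → ZMod 2))
    (hind : LinearIndependent (ZMod 2) (fun i : Fin w => a (Fin.castLE hw i)))
    (hspan : ∀ j : Fin K,
      a j ∈ Submodule.span (ZMod 2) (Set.range (fun i : Fin w => a (Fin.castLE hw i)))) :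
    ((∏ j : Fin K,
        (AddMonoidAlgebra.single (0 : Fin m → ZMod 2) (1 / 2 : ℝ) +
          AddMonoidAlgebra.single (a j) (1 / 2)))
      = ((2 : ℝ) ^ w)⁻¹ •
          ∏ i : Fin w,
            (AddMonoidAlgebra.single (0 : Fin m → ZMod 2) (1 : ℝ) +
              AddMonoidAlgebra.single (a (Fin.castLE hw i)) 1)) ∧
      ∀ v : Fin m → ZMod 2,
        (v ∈ Submodule.span (ZMod 2) (Set.range a) →
          ((∏ j : Fin K,
              (AddMonoidAlgebra.single (0 : Fin m → ZMod 2) (1 / 2 : ℝ) +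
                AddMonoidAlgebra.single (a j) (1 / 2))) :
            AddMonoidAlgebra ℝ (Fin m → ZMod 2)).coeff v = ((2 : ℝ) ^ w)⁻¹) ∧
        (v ∉ Submodule.span (ZMod 2) (Set.range a) →
          ((∏ j : Fin K,
              (AddMonoidAlgebra.single (0 : Fin m → ZMod 2) (1 / 2 : ℝ) +
                AddMonoidAlgebra.single (a j) (1 / 2))) :
            AddMonoidAlgebra ℝ (Fin m → ZMod 2)).coeff v = 0) := by
  classical
  set b : Fin w → (Fin m → ZMod 2) := fun i => a (Fin.castLE hw i) with hb
  set W : Submodule (ZMod 2) (Fin m → ZMod 2) := Submodule.span (ZMod 2) (Set.range b) with hWdef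
  have hE : ∏ i : Fin w, (AddMonoidAlgebra.single (0 : Fin m → ZMod 2) (1:ℝ) +
      AddMonoidAlgebra.single (b i) 1) = unifSp W := prod_one_add_single b hind
  -- half factor identity
  have hfac : ∀ x : Fin m → ZMod 2,
      AddMonoidAlgebra.single (0 : Fin m → ZMod 2) (1/2 : ℝ) +
        AddMonoidAlgebra.single x (1/2) =
      ((2:ℝ)⁻¹) • (AddMonoidAlgebra.single (0 : Fin m → ZMod 2) (1:ℝ) +
        AddMonoidAlgebra.single x 1) := by
    intro x
    rw [smul_add, AddMonoidAlgebra.smul_single, AddMonoidAlgebra.smul_single]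
    norm_num
  -- absorption
  have habs1 : ∀ x ∈ W, (AddMonoidAlgebra.single (0 : Fin m → ZMod 2) (1/2 : ℝ) +
      AddMonoidAlgebra.single x (1/2)) * unifSp W = unifSp W := by
    intro x hx
    rw [hfac, smul_mul_assoc, add_mul, single_mul_unifSp W.zero_mem, single_mul_unifSp hx,
      ← two_smul ℝ (unifSp W), smul_smul]
    norm_num
  have habs : ∀ s : Finset (Fin K),
      (∏ j ∈ s, (AddMonoidAlgebra.single (0 : Fin m → ZMod 2) (1/2 : ℝ) +
        AddMonoidAlgebra.single (a j) (1/2))) * unifSp W = unifSp W := by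
    intro s
    induction s using Finset.induction_on with
    | empty => simp
    | insert j s hnot ih =>
      rw [Finset.prod_insert hnot, mul_assoc, ih, habs1 (a j) (hspan j)]
  -- split the product over Fin K
  have himg : (Finset.univ : Finset (Fin w)).map (Fin.castLEEmb hw) =
      Finset.univ.filter (fun j : Fin K => (j : ℕ) < w) := by
    ext j
    simp only [Finset.mem_map, Finset.mem_univ, true_and, Finset.mem_filter]
    constructor
    · rintro ⟨i, rfl⟩
      simp
    · intro hj
      exact ⟨⟨(j : ℕ), hj⟩, by ext; simp⟩
  have hltprod : (∏ j ∈ Finset.univ.filter (fun j : Fin K => (j : ℕ) < w),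
      (AddMonoidAlgebra.single (0 : Fin m → ZMod 2) (1/2 : ℝ) +
        AddMonoidAlgebra.single (a j) (1/2))) = ((2:ℝ) ^ w)⁻¹ • unifSp W := by
    rw [← himg, Finset.prod_map]
    have : ∀ i : Fin w, (AddMonoidAlgebra.single (0 : Fin m → ZMod 2) (1/2 : ℝ) +
        AddMonoidAlgebra.single (a (Fin.castLEEmb hw i)) (1/2)) =
        ((2:ℝ)⁻¹) • (AddMonoidAlgebra.single (0 : Fin m → ZMod 2) (1:ℝ) +
          AddMonoidAlgebra.single (b i) 1) := fun i => hfac _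
    rw [Finset.prod_congr rfl (fun i _ => this i), prod_smul_const, hE,
      Finset.card_univ, Fintype.card_fin, inv_pow]
  have hmain : (∏ j : Fin K,
      (AddMonoidAlgebra.single (0 : Fin m → ZMod 2) (1/2 : ℝ) +
        AddMonoidAlgebra.single (a j) (1/2))) = ((2:ℝ) ^ w)⁻¹ • unifSp W := by
    rw [← Finset.prod_filter_mul_prod_filter_not Finset.univ (fun j : Fin K => (j : ℕ) < w),
      hltprod, smul_mul_assoc, mul_comm, habs]
  constructor
  · rw [hmain, hE]
  · have hWeq : Submodule.span (ZMod 2) (Set.range a) = W := by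
      apply le_antisymm
      · rw [Submodule.span_le]
        rintro _ ⟨j, rfl⟩
        exact hspan j
      · exact Submodule.span_mono (by rintro _ ⟨i, rfl⟩; exact ⟨Fin.castLE hw i, rfl⟩)
    intro v
    rw [hmain, hWeq]
    constructor
    · intro hv
      rw [AddMonoidAlgebra.coeff_smul_apply, unifSp_apply, if_pos hv, smul_eq_mul, mul_one]
    · intro hv
      rw [AddMonoidAlgebra.coeff_smul_apply, unifSp_apply, if_neg hv, smul_eq_mul, mul_zero]
end
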